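/- Let n ≥ 1, s ∈ (0,1), u₀ ∈ L¹(ℝⁿ) with total mass M = ∫_{ℝⁿ} u₀(x) dx and finite first absolute moment N₁(u₀) = ∫_{ℝⁿ} |y| |u₀(y)| dy < ∞, and let u(x,t) = ∫_{ℝⁿ} P(x−y,t;s) u₀(y) dy. Then there exists a constant C₁ = C₁(n,s) > 0 such that for all t > 0 and all x ∈ ℝⁿ, t^{n/(2s)} |u(x,t) − M·P(x,t;s)| ≤ C₁ N₁(u₀) t^{−1/(2s)}. -/

import Mathlib

open MeasureTheory Real Filter

/-- The fractional heat kernel `P(x,t;s)` on `ℝⁿ`: the inverse Fourier transform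
in space of `ξ ↦ exp(-t |ξ|^(2s))`. -/
noncomputable def fracP (n : ℕ) (s : ℝ) (x : EuclideanSpace ℝ (Fin n)) (t : ℝ) : ℝ :=
  ((2 * π) ^ n)⁻¹ * (∫ ξ : EuclideanSpace ℝ (Fin n),
    Complex.exp (Complex.I * ((inner ℝ x ξ : ℝ) : ℂ)) *
      Complex.exp (-(t : ℂ) * ((‖ξ‖ ^ (2 * s) : ℝ) : ℂ))).re

/-- The solution of the fractional heat equation with initial datum `u₀`:
`u(x,t) = ∫ P(x-y,t;s) u₀(y) dy`. -/
noncomputable def fracSol (n : ℕ) (s : ℝ) (u₀ : EuclideanSpace ℝ (Fin n) → ℝ)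
    (x : EuclideanSpace ℝ (Fin n)) (t : ℝ) : ℝ :=
  ∫ y, fracP n s (x - y) t * u₀ y

lemma pow_div_factorial_le_exp {x : ℝ} (hx : 0 ≤ x) (m : ℕ) :
    x ^ m / m.factorial ≤ Real.exp x := by
  calc x ^ m / m.factorial
      ≤ ∑ i ∈ Finset.range (m + 1), x ^ i / i.factorial := by
        exact Finset.single_le_sum (f := fun i => x ^ i / (i.factorial : ℝ))
          (fun i _ => by positivity) (Finset.self_mem_range_succ m)
    _ ≤ Real.exp x := Real.sum_le_exp_of_nonneg hx _

lemma aux_claim {p t : ℝ} (hp : 0 < p) (ht : 0 < t) (q : ℝ) (hq : 0 ≤ q) :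
    ∃ C : ℝ, 0 < C ∧ ∀ u : ℝ, 0 ≤ u →
      (1 + u) ^ (q + 1) * Real.exp (-(t * u ^ p)) ≤ C := by
  set m : ℕ := ⌈(q + 1) / p⌉₊ with hm
  have hpm : q + 1 ≤ p * m := by
    have h1 : (q + 1) / p ≤ (m : ℝ) := Nat.le_ceil _
    calc q + 1 = ((q+1)/p) * p := by field_simp
      _ ≤ (m : ℝ) * p := by gcongr
      _ = p * m := by ring
  set A : ℝ := (2 : ℝ) ^ (q + 1) with hA
  have hApos : 0 < A := by positivity
  set F : ℝ := (m.factorial : ℝ) with hF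
  have hFpos : 0 < F := by positivity
  set T : ℝ := t ^ m with hT
  have hTpos : 0 < T := by positivity
  refine ⟨A * (1 + F / T), by positivity, fun u hu => ?_⟩
  rcases le_or_gt u 1 with h1 | h1
  · calc (1 + u) ^ (q + 1) * Real.exp (-(t * u ^ p))
        ≤ (2 : ℝ) ^ (q + 1) * 1 := by
          apply mul_le_mul _ _ (Real.exp_nonneg _) (by positivity)
          · exact Real.rpow_le_rpow (by linarith) (by linarith) (by linarith)
          · rw [Real.exp_le_one_iff]
            have : 0 ≤ u ^ p := Real.rpow_nonneg hu p
            nlinarith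
      _ ≤ A * (1 + F / T) := by
          rw [mul_one]
          nlinarith [div_nonneg hFpos.le hTpos.le]
  · have hu1 : (1 : ℝ) ≤ u := h1.le
    have hu0 : (0 : ℝ) < u := by linarith
    have hx : 0 < t * u ^ p := by
      have := Real.rpow_pos_of_pos hu0 p; positivity
    have hexp : Real.exp (-(t * u ^ p)) ≤ F / (t * u ^ p) ^ m := by
      have h := pow_div_factorial_le_exp hx.le m
      rw [Real.exp_neg]
      calc (Real.exp (t * u ^ p))⁻¹ ≤ ((t * u ^ p) ^ m / F)⁻¹ := by
            gcongr
        _ = F / (t * u ^ p) ^ m := by rw [inv_div]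
    have hupm : (u ^ p) ^ m = u ^ (p * m) := by
      rw [← Real.rpow_natCast (u ^ p) m, ← Real.rpow_mul hu]
    calc (1 + u) ^ (q + 1) * Real.exp (-(t * u ^ p))
        ≤ (2 * u) ^ (q + 1) * (F / (t * u ^ p) ^ m) := by
          apply mul_le_mul _ hexp (Real.exp_nonneg _) (by positivity)
          exact Real.rpow_le_rpow (by linarith) (by linarith) (by linarith)
      _ = (A * (F / T)) * (u ^ (q + 1) / u ^ (p * (m : ℝ))) := by
          rw [Real.mul_rpow (by norm_num) hu, mul_pow, hupm]
          field_simp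
          ring
      _ = (A * (F / T)) * u ^ (q + 1 - p * m) := by
          rw [Real.rpow_sub hu0]
      _ ≤ (A * (F / T)) * 1 :=
          mul_le_mul_of_nonneg_left
            (Real.rpow_le_one_of_one_le_of_nonpos hu1 (by push_cast; linarith))
            (by positivity)
      _ ≤ A * (1 + F / T) := by
          rw [mul_one]
          nlinarith [div_nonneg hFpos.le hTpos.le]

lemma integrable_weight (n : ℕ) {p t : ℝ} (hp : 0 < p) (ht : 0 < t) (k : ℕ) (hk : k ≤ 1) :
    Integrable (fun ξ : EuclideanSpace ℝ (Fin n) =>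
      ‖ξ‖ ^ k * Real.exp (-(t * ‖ξ‖ ^ p))) := by
  obtain ⟨C, hC, hCb⟩ := aux_claim hp ht ((n : ℝ) + 1) (by positivity)
  have hfin : ((Module.finrank ℝ (EuclideanSpace ℝ (Fin n)) : ℝ)) < (n : ℝ) + 1 := by
    rw [finrank_euclideanSpace_fin]; linarith
  have hint : Integrable (fun ξ : EuclideanSpace ℝ (Fin n) =>
      C * (1 + ‖ξ‖) ^ (-((n : ℝ) + 1))) := (integrable_one_add_norm hfin).const_mul C
  refine hint.mono' ?_ (Filter.Eventually.of_forall fun ξ => ?_)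
  · apply Continuous.aestronglyMeasurable
    apply Continuous.mul (continuous_norm.pow k)
    exact Real.continuous_exp.comp
      ((continuous_const.mul (continuous_norm.rpow_const fun x => Or.inr hp.le)).neg)
  · set u := ‖ξ‖ with hu'
    have hu : 0 ≤ u := norm_nonneg _
    have hpos : (0 : ℝ) < 1 + u := by linarith
    rw [Real.norm_eq_abs, abs_of_nonneg (by positivity)]
    have h1 : u ^ k ≤ 1 + u := by
      interval_cases k
      · simpa using (by linarith : (1:ℝ) ≤ 1 + u)
      · simpa using (by linarith : u ≤ 1 + u)
    have key : (1 + u) ^ (((n : ℝ) + 1) + 1) * (1 + u) ^ (-((n : ℝ) + 1)) = 1 + u := by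
      have he : (((n : ℝ) + 1) + 1) + (-((n : ℝ) + 1)) = 1 := by ring
      rw [← Real.rpow_add hpos, he, Real.rpow_one]
    calc u ^ k * Real.exp (-(t * u ^ p))
        ≤ (1 + u) * Real.exp (-(t * u ^ p)) :=
          mul_le_mul_of_nonneg_right h1 (Real.exp_nonneg _)
      _ = ((1 + u) ^ (((n : ℝ) + 1) + 1) * Real.exp (-(t * u ^ p))) *
            (1 + u) ^ (-((n : ℝ) + 1)) := by
          rw [mul_right_comm, key]
      _ ≤ C * (1 + u) ^ (-((n : ℝ) + 1)) := by
          gcongr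
          exact hCb u hu

lemma norm_integrand_eq (t a r : ℝ) :
    ‖Complex.exp (Complex.I * (a : ℂ)) * Complex.exp (-(t : ℂ) * (r : ℂ))‖ =
      Real.exp (-(t * r)) := by
  rw [norm_mul]
  simp [Complex.norm_exp]

lemma cexp_I_sub_one_le (θ : ℝ) :
    ‖Complex.exp (Complex.I * (θ : ℂ)) - 1‖ ≤ |θ| := by
  have h : Complex.exp (Complex.I * (θ : ℂ)) - 1 =
      ((Real.cos θ - 1 : ℝ) : ℂ) + ((Real.sin θ : ℝ) : ℂ) * Complex.I := by
    rw [mul_comm, Complex.exp_mul_I, ← Complex.ofReal_cos, ← Complex.ofReal_sin]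
    push_cast
    ring
  rw [h, Complex.norm_add_mul_I]
  have hle : (Real.cos θ - 1) ^ 2 + (Real.sin θ) ^ 2 ≤ θ ^ 2 := by
    nlinarith [Real.sin_sq_add_cos_sq θ, Real.one_sub_sq_div_two_le_cos (x := θ)]
  calc Real.sqrt ((Real.cos θ - 1) ^ 2 + Real.sin θ ^ 2)
      ≤ Real.sqrt (θ ^ 2) := Real.sqrt_le_sqrt hle
    _ = |θ| := Real.sqrt_sq_eq_abs θ

lemma cexp_I_diff_le (a b : ℝ) :
    ‖Complex.exp (Complex.I * (a : ℂ)) - Complex.exp (Complex.I * (b : ℂ))‖ ≤ |a - b| := by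
  have h : Complex.exp (Complex.I * (a : ℂ)) - Complex.exp (Complex.I * (b : ℂ)) =
      (Complex.exp (Complex.I * ((a - b : ℝ) : ℂ)) - 1) * Complex.exp (Complex.I * (b : ℂ)) := by
    rw [sub_mul, ← Complex.exp_add, one_mul]
    push_cast
    ring_nf
  rw [h, norm_mul]
  have h2 : ‖Complex.exp (Complex.I * (b : ℂ))‖ = 1 := by
    simp [Complex.norm_exp]
  rw [h2, mul_one]
  exact cexp_I_sub_one_le (a - b)

lemma J_scaling (n : ℕ) {p t : ℝ} (hp : 0 < p) (ht : 0 < t) :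
    (∫ ξ : EuclideanSpace ℝ (Fin n), ‖ξ‖ * Real.exp (-(t * ‖ξ‖ ^ p))) =
      t ^ (-((n : ℝ) + 1) / p) *
        ∫ ξ : EuclideanSpace ℝ (Fin n), ‖ξ‖ * Real.exp (-(‖ξ‖ ^ p)) := by
  set c : ℝ := t ^ ((-1 : ℝ) / p) with hc
  have hcpos : 0 < c := Real.rpow_pos_of_pos ht _
  have hcp : c ^ p = t⁻¹ := by
    rw [hc, ← Real.rpow_mul ht.le]
    rw [div_mul_cancel₀ _ (ne_of_gt hp), Real.rpow_neg_one]
  have hfr : Module.finrank ℝ (EuclideanSpace ℝ (Fin n)) = n := finrank_euclideanSpace_fin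
  have key : c * (∫ ξ : EuclideanSpace ℝ (Fin n), ‖ξ‖ * Real.exp (-(‖ξ‖ ^ p))) =
      (c ^ n)⁻¹ * ∫ ξ : EuclideanSpace ℝ (Fin n), ‖ξ‖ * Real.exp (-(t * ‖ξ‖ ^ p)) := by
    have h0 := MeasureTheory.Measure.integral_comp_smul (μ := volume)
      (f := fun ξ : EuclideanSpace ℝ (Fin n) => ‖ξ‖ * Real.exp (-(t * ‖ξ‖ ^ p))) c
    rw [hfr, smul_eq_mul, abs_of_pos (by positivity)] at h0
    rw [← h0, ← integral_const_mul]
    congr 1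
    funext ξ
    rw [norm_smul, Real.norm_eq_abs, abs_of_pos hcpos,
      Real.mul_rpow hcpos.le (norm_nonneg ξ), hcp, ← mul_assoc t,
      mul_inv_cancel₀ (ne_of_gt ht), one_mul]
    ring
  have hcn : (0 : ℝ) < c ^ n := by positivity
  have hJ : (∫ ξ : EuclideanSpace ℝ (Fin n), ‖ξ‖ * Real.exp (-(t * ‖ξ‖ ^ p))) =
      c ^ (n + 1) * ∫ ξ : EuclideanSpace ℝ (Fin n), ‖ξ‖ * Real.exp (-(‖ξ‖ ^ p)) := by
    calc (∫ ξ : EuclideanSpace ℝ (Fin n), ‖ξ‖ * Real.exp (-(t * ‖ξ‖ ^ p)))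
        = c ^ n * ((c ^ n)⁻¹ *
            ∫ ξ : EuclideanSpace ℝ (Fin n), ‖ξ‖ * Real.exp (-(t * ‖ξ‖ ^ p))) := by
          field_simp
      _ = c ^ n * (c * ∫ ξ : EuclideanSpace ℝ (Fin n), ‖ξ‖ * Real.exp (-(‖ξ‖ ^ p))) := by
          rw [← key]
      _ = c ^ (n + 1) * ∫ ξ : EuclideanSpace ℝ (Fin n), ‖ξ‖ * Real.exp (-(‖ξ‖ ^ p)) := by
          rw [pow_succ]; ring
  rw [hJ]
  congr 1
  rw [← Real.rpow_natCast c (n + 1), hc, ← Real.rpow_mul ht.le]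
  congr 1
  push_cast
  field_simp

lemma continuous_F (n : ℕ) {s : ℝ} (hs : 0 < s) (t : ℝ) (z : EuclideanSpace ℝ (Fin n)) :
    Continuous (fun ξ : EuclideanSpace ℝ (Fin n) =>
      Complex.exp (Complex.I * ((inner ℝ z ξ : ℝ) : ℂ)) *
        Complex.exp (-(t : ℂ) * ((‖ξ‖ ^ (2 * s) : ℝ) : ℂ))) := by
  apply Continuous.mul
  · exact Complex.continuous_exp.comp (continuous_const.mul
      (Complex.continuous_ofReal.comp (Continuous.inner continuous_const continuous_id)))
  · exact Complex.continuous_exp.comp (continuous_const.mul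
      (Complex.continuous_ofReal.comp
        (continuous_norm.rpow_const fun _ => Or.inr (by linarith))))

lemma integrable_F (n : ℕ) {s t : ℝ} (hs : 0 < s) (ht : 0 < t)
    (x : EuclideanSpace ℝ (Fin n)) :
    Integrable (fun ξ : EuclideanSpace ℝ (Fin n) =>
      Complex.exp (Complex.I * ((inner ℝ x ξ : ℝ) : ℂ)) *
        Complex.exp (-(t : ℂ) * ((‖ξ‖ ^ (2 * s) : ℝ) : ℂ))) := by
  have h0 : Integrable (fun ξ : EuclideanSpace ℝ (Fin n) =>
      Real.exp (-(t * ‖ξ‖ ^ (2 * s)))) := by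
    simpa using integrable_weight n (by linarith : (0:ℝ) < 2 * s) ht 0 (by norm_num)
  refine h0.mono' (continuous_F n hs t x).aestronglyMeasurable
    (Filter.Eventually.of_forall fun ξ => ?_)
  rw [norm_integrand_eq]

lemma fracP_abs_le (n : ℕ) {s t : ℝ} (hs : 0 < s) (ht : 0 < t)
    (z : EuclideanSpace ℝ (Fin n)) :
    |fracP n s z t| ≤ ((2 * π) ^ n)⁻¹ *
      ∫ ξ : EuclideanSpace ℝ (Fin n), Real.exp (-(t * ‖ξ‖ ^ (2 * s))) := by
  have hc₀ : (0:ℝ) ≤ ((2 * π) ^ n)⁻¹ := by positivity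
  rw [fracP, abs_mul, abs_of_nonneg hc₀]
  apply mul_le_mul_of_nonneg_left _ hc₀
  calc |(∫ ξ : EuclideanSpace ℝ (Fin n),
        Complex.exp (Complex.I * ((inner ℝ z ξ : ℝ) : ℂ)) *
          Complex.exp (-(t : ℂ) * ((‖ξ‖ ^ (2 * s) : ℝ) : ℂ))).re|
      ≤ ‖∫ ξ : EuclideanSpace ℝ (Fin n),
        Complex.exp (Complex.I * ((inner ℝ z ξ : ℝ) : ℂ)) *
          Complex.exp (-(t : ℂ) * ((‖ξ‖ ^ (2 * s) : ℝ) : ℂ))‖ := Complex.abs_re_le_norm _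
    _ ≤ ∫ ξ : EuclideanSpace ℝ (Fin n), ‖Complex.exp (Complex.I * ((inner ℝ z ξ : ℝ) : ℂ)) *
          Complex.exp (-(t : ℂ) * ((‖ξ‖ ^ (2 * s) : ℝ) : ℂ))‖ :=
        norm_integral_le_integral_norm _
    _ = ∫ ξ : EuclideanSpace ℝ (Fin n), Real.exp (-(t * ‖ξ‖ ^ (2 * s))) := by
        simp only [norm_integrand_eq]

lemma continuous_fracP (n : ℕ) {s t : ℝ} (hs : 0 < s) (ht : 0 < t) :
    Continuous fun z : EuclideanSpace ℝ (Fin n) => fracP n s z t := by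
  unfold fracP
  apply Continuous.mul continuous_const
  apply Complex.continuous_re.comp
  apply continuous_of_dominated
    (bound := fun ξ : EuclideanSpace ℝ (Fin n) => Real.exp (-(t * ‖ξ‖ ^ (2 * s))))
  · exact fun z => (continuous_F n hs t z).aestronglyMeasurable
  · intro z
    exact Filter.Eventually.of_forall fun ξ => le_of_eq (norm_integrand_eq _ _ _)
  · simpa using integrable_weight n (by linarith : (0:ℝ) < 2 * s) ht 0 (by norm_num)
  · apply Filter.Eventually.of_forall
    intro ξ
    apply Continuous.mul _ continuous_const
    exact Complex.continuous_exp.comp (continuous_const.mul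
      (Complex.continuous_ofReal.comp (Continuous.inner continuous_id continuous_const)))

lemma fracP_diff_le (n : ℕ) {s t : ℝ} (hs : 0 < s) (ht : 0 < t)
    (x y : EuclideanSpace ℝ (Fin n)) :
    |fracP n s (x - y) t - fracP n s x t| ≤ ((2 * π) ^ n)⁻¹ *
      (‖y‖ * ∫ ξ : EuclideanSpace ℝ (Fin n), ‖ξ‖ * Real.exp (-(t * ‖ξ‖ ^ (2 * s)))) := by
  have hc₀ : (0:ℝ) ≤ ((2 * π) ^ n)⁻¹ := by positivity
  have hsub : fracP n s (x - y) t - fracP n s x t = ((2 * π) ^ n)⁻¹ *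
      (∫ ξ : EuclideanSpace ℝ (Fin n),
        (Complex.exp (Complex.I * ((inner ℝ (x - y) ξ : ℝ) : ℂ)) -
          Complex.exp (Complex.I * ((inner ℝ x ξ : ℝ) : ℂ))) *
            Complex.exp (-(t : ℂ) * ((‖ξ‖ ^ (2 * s) : ℝ) : ℂ))).re := by
    simp only [fracP]
    rw [show ∀ a b : ℝ, ((2 * π) ^ n)⁻¹ * a - ((2 * π) ^ n)⁻¹ * b
        = ((2 * π) ^ n)⁻¹ * (a - b) from fun a b => by ring, ← Complex.sub_re,
      ← integral_sub (integrable_F n hs ht (x - y)) (integrable_F n hs ht x)]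
    congr 2
    exact integral_congr_ae (Filter.Eventually.of_forall fun ξ => by ring)
  rw [hsub, abs_mul, abs_of_nonneg hc₀]
  apply mul_le_mul_of_nonneg_left _ hc₀
  have hJint : Integrable (fun ξ : EuclideanSpace ℝ (Fin n) =>
      ‖y‖ * (‖ξ‖ * Real.exp (-(t * ‖ξ‖ ^ (2 * s))))) := by
    apply Integrable.const_mul
    simpa using integrable_weight n (by linarith : (0:ℝ) < 2 * s) ht 1 le_rfl
  calc |(∫ ξ : EuclideanSpace ℝ (Fin n),
        (Complex.exp (Complex.I * ((inner ℝ (x - y) ξ : ℝ) : ℂ)) -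
          Complex.exp (Complex.I * ((inner ℝ x ξ : ℝ) : ℂ))) *
            Complex.exp (-(t : ℂ) * ((‖ξ‖ ^ (2 * s) : ℝ) : ℂ))).re|
      ≤ ‖∫ ξ : EuclideanSpace ℝ (Fin n),
        (Complex.exp (Complex.I * ((inner ℝ (x - y) ξ : ℝ) : ℂ)) -
          Complex.exp (Complex.I * ((inner ℝ x ξ : ℝ) : ℂ))) *
            Complex.exp (-(t : ℂ) * ((‖ξ‖ ^ (2 * s) : ℝ) : ℂ))‖ := Complex.abs_re_le_norm _
    _ ≤ ∫ ξ : EuclideanSpace ℝ (Fin n), ‖y‖ * (‖ξ‖ * Real.exp (-(t * ‖ξ‖ ^ (2 * s)))) := by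
        apply norm_integral_le_of_norm_le hJint
        apply Filter.Eventually.of_forall
        intro ξ
        rw [norm_mul]
        have h1 : ‖Complex.exp (Complex.I * ((inner ℝ (x - y) ξ : ℝ) : ℂ)) -
            Complex.exp (Complex.I * ((inner ℝ x ξ : ℝ) : ℂ))‖ ≤ ‖y‖ * ‖ξ‖ := by
          refine (cexp_I_diff_le _ _).trans ?_
          rw [inner_sub_left]
          rw [show (inner ℝ x ξ : ℝ) - (inner ℝ y ξ : ℝ) - (inner ℝ x ξ : ℝ) = -(inner ℝ y ξ : ℝ) by ring,
            abs_neg]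
          exact abs_real_inner_le_norm y ξ
        have h2 : ‖Complex.exp (-(t : ℂ) * ((‖ξ‖ ^ (2 * s) : ℝ) : ℂ))‖ =
            Real.exp (-(t * ‖ξ‖ ^ (2 * s))) := by
          simp [Complex.norm_exp]
        rw [h2]
        calc ‖Complex.exp (Complex.I * ((inner ℝ (x - y) ξ : ℝ) : ℂ)) -
            Complex.exp (Complex.I * ((inner ℝ x ξ : ℝ) : ℂ))‖ * Real.exp (-(t * ‖ξ‖ ^ (2 * s)))
            ≤ (‖y‖ * ‖ξ‖) * Real.exp (-(t * ‖ξ‖ ^ (2 * s))) :=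
              mul_le_mul_of_nonneg_right h1 (Real.exp_nonneg _)
          _ = ‖y‖ * (‖ξ‖ * Real.exp (-(t * ‖ξ‖ ^ (2 * s)))) := by ring
    _ = ‖y‖ * ∫ ξ : EuclideanSpace ℝ (Fin n), ‖ξ‖ * Real.exp (-(t * ‖ξ‖ ^ (2 * s))) :=
        integral_const_mul _ _

theorem fracHeat_pointwise_rate_finite_first_moment
    (n : ℕ) (hn : 1 ≤ n) (s : ℝ) (hs : s ∈ Set.Ioo (0:ℝ) 1)
    (u₀ : EuclideanSpace ℝ (Fin n) → ℝ) (hu₀ : Integrable u₀)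
    (hmom : Integrable (fun y => ‖y‖ * u₀ y))
    (M : ℝ) (hM : M = ∫ x, u₀ x) :
    ∃ C₁ > (0:ℝ), ∀ t > (0:ℝ), ∀ x : EuclideanSpace ℝ (Fin n),
      t ^ ((n : ℝ) / (2 * s)) * |fracSol n s u₀ x t - M * fracP n s x t| ≤
        C₁ * (∫ y, ‖y‖ * |u₀ y|) * t ^ (-1 / (2 * s)) := by
  obtain ⟨hs0, hs1⟩ := hs
  set K : ℝ := ∫ ξ : EuclideanSpace ℝ (Fin n), ‖ξ‖ * Real.exp (-(‖ξ‖ ^ (2 * s))) with hK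
  have hK0 : 0 ≤ K :=
    integral_nonneg fun ξ => by positivity
  set c₀ : ℝ := ((2 * π) ^ n)⁻¹ with hc₀
  have hc₀0 : 0 ≤ c₀ := by positivity
  refine ⟨c₀ * K + 1, by positivity, fun t ht x => ?_⟩
  set N : ℝ := ∫ y, ‖y‖ * |u₀ y| with hN
  have hNint : Integrable (fun y : EuclideanSpace ℝ (Fin n) => ‖y‖ * |u₀ y|) := by
    refine hmom.abs.congr (Filter.Eventually.of_forall fun y => ?_)
    simp only [abs_mul, abs_norm]
  have hN0 : 0 ≤ N := integral_nonneg fun y => by positivity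
  set Jt : ℝ := ∫ ξ : EuclideanSpace ℝ (Fin n), ‖ξ‖ * Real.exp (-(t * ‖ξ‖ ^ (2 * s)))
    with hJt
  have hJt0 : 0 ≤ Jt := integral_nonneg fun ξ => by positivity
  -- step 1 : difference representation
  have hint1 : Integrable (fun y : EuclideanSpace ℝ (Fin n) => fracP n s (x - y) t * u₀ y) := by
    refine hu₀.bdd_mul (c := c₀ * ∫ ξ : EuclideanSpace ℝ (Fin n), Real.exp (-(t * ‖ξ‖ ^ (2 * s)))) ?_ ?_
    · exact ((continuous_fracP n hs0 ht).comp (continuous_const.sub continuous_id)).aestronglyMeasurable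
    · refine Filter.Eventually.of_forall fun y => ?_
      rw [Real.norm_eq_abs]
      exact fracP_abs_le n hs0 ht (x - y)
  have hint2 : Integrable (fun y : EuclideanSpace ℝ (Fin n) => fracP n s x t * u₀ y) :=
    hu₀.const_mul _
  have hdiff : fracSol n s u₀ x t - M * fracP n s x t =
      ∫ y, (fracP n s (x - y) t - fracP n s x t) * u₀ y := by
    have hM' : M * fracP n s x t = ∫ y, fracP n s x t * u₀ y := by
      rw [integral_const_mul, hM, mul_comm]
    rw [fracSol, hM', ← integral_sub hint1 hint2]
    congr 1
    funext y
    ring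
  -- step 2 : estimate
  have hbound : |fracSol n s u₀ x t - M * fracP n s x t| ≤ c₀ * Jt * N := by
    rw [hdiff]
    calc |∫ y, (fracP n s (x - y) t - fracP n s x t) * u₀ y|
        ≤ ∫ y, |(fracP n s (x - y) t - fracP n s x t) * u₀ y| :=
          by simpa only [Real.norm_eq_abs] using
            norm_integral_le_integral_norm
              (fun y => (fracP n s (x - y) t - fracP n s x t) * u₀ y)
      _ ≤ ∫ y, (c₀ * Jt) * (‖y‖ * |u₀ y|) := by
          refine integral_mono_of_nonneg (Filter.Eventually.of_forall fun y => abs_nonneg _)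
            (hNint.const_mul _) (Filter.Eventually.of_forall fun y => ?_)
          simp only [abs_mul]
          calc |fracP n s (x - y) t - fracP n s x t| * |u₀ y|
              ≤ (c₀ * (‖y‖ * Jt)) * |u₀ y| :=
                mul_le_mul_of_nonneg_right (fracP_diff_le n hs0 ht x y) (abs_nonneg _)
            _ = (c₀ * Jt) * (‖y‖ * |u₀ y|) := by ring
      _ = (c₀ * Jt) * N := integral_const_mul _ _
      _ = c₀ * Jt * N := by ring
  -- step 3 : scaling
  have hscale : Jt = t ^ (-((n : ℝ) + 1) / (2 * s)) * K :=
    J_scaling n (by linarith) ht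
  have hexp : t ^ ((n : ℝ) / (2 * s)) * t ^ (-((n : ℝ) + 1) / (2 * s)) =
      t ^ (-1 / (2 * s)) := by
    rw [← Real.rpow_add ht]
    congr 1
    field_simp
    ring
  have htp : (0:ℝ) ≤ t ^ ((n : ℝ) / (2 * s)) := (Real.rpow_pos_of_pos ht _).le
  calc t ^ ((n : ℝ) / (2 * s)) * |fracSol n s u₀ x t - M * fracP n s x t|
      ≤ t ^ ((n : ℝ) / (2 * s)) * (c₀ * Jt * N) :=
        mul_le_mul_of_nonneg_left hbound htp
    _ = (c₀ * K) * N * (t ^ ((n : ℝ) / (2 * s)) * t ^ (-((n : ℝ) + 1) / (2 * s))) := by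
        rw [hscale]; ring
    _ = (c₀ * K) * N * t ^ (-1 / (2 * s)) := by rw [hexp]
    _ ≤ (c₀ * K + 1) * N * t ^ (-1 / (2 * s)) := by
        have : (0:ℝ) ≤ N * t ^ (-1 / (2 * s)) := by positivity
        nlinarith
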